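/- In the static undirected fitness model on n nodes where, conditional on fitnesses θ ∈ ℝⁿ, each edge {i,j} (i ≠ j) is present independently with probability σ(θ_i + θ_j), and the θ_i are i.i.d.-marginal Gaussian N(m, s²) with pairwise correlation r, the expected density E[δ] = E[(2/(n(n-1))) ∑_{i<j} a_{ij}] equals I(2m, 2s²(1+r)). -/

import Mathlib

open MeasureTheory ProbabilityTheory Real Finset

/-- The standard logistic sigmoid. -/
noncomputable def logistic (x : ℝ) : ℝ := 1 / (1 + Real.exp (-x))

/-- The logistic-normal integral `I(m, v) = E[σ(X)]`, `X ~ N(m, v)`. -/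
noncomputable def logisticNormalI (m : ℝ) (v : NNReal) : ℝ :=
  ∫ x, logistic x ∂(gaussianReal m v)

/-- Bivariate Gaussian density with means `mi, mj`, common variance `s²` and
correlation `r`. -/
noncomputable def bivGaussianDensity (mi mj s r : ℝ) (p : ℝ × ℝ) : ℝ :=
  (1 / (2 * Real.pi * s ^ 2 * Real.sqrt (1 - r ^ 2))) *
    Real.exp (-(1 / (2 * s ^ 2 * (1 - r ^ 2))) *
      ((p.1 - mi) ^ 2 - 2 * r * (p.1 - mi) * (p.2 - mj) + (p.2 - mj) ^ 2))

open scoped ENNReal NNReal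

lemma logistic_pos (x : ℝ) : 0 < logistic x := by unfold logistic; positivity

lemma logistic_le_one (x : ℝ) : logistic x ≤ 1 := by
  unfold logistic
  rw [div_le_one (by positivity)]
  linarith [Real.exp_pos (-x)]

lemma continuous_logistic : Continuous logistic := by
  unfold logistic; fun_prop (disch := intros; positivity)

lemma continuous_biv (mi mj s r : ℝ) : Continuous (bivGaussianDensity mi mj s r) := by
  unfold bivGaussianDensity; fun_prop

lemma biv_nonneg (mi mj s r : ℝ) (p : ℝ × ℝ) : 0 ≤ bivGaussianDensity mi mj s r p := by
  unfold bivGaussianDensity; positivity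

lemma integrable_biv (m s r : ℝ) (hs : 0 < s) (hr : |r| < 1) :
    Integrable (bivGaussianDensity m m s r) (volume : Measure (ℝ × ℝ)) := by
  obtain ⟨hr1, hr2⟩ := abs_lt.mp hr
  have h1r : 0 < 1 - r ^ 2 := by nlinarith
  have habs : 0 < 1 - |r| := by rw [sub_pos]; exact hr
  set k : ℝ := (1 - |r|) / (2 * s ^ 2 * (1 - r ^ 2)) with hk
  have hkpos : 0 < k := by positivity
  have hint : Integrable (fun x : ℝ => Real.exp (-k * (x - m) ^ 2)) volume :=
    (integrable_exp_neg_mul_sq hkpos).comp_sub_right m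
  rw [Measure.volume_eq_prod]
  refine Integrable.mono'
    (g := fun p : ℝ × ℝ => (1 / (2 * Real.pi * s ^ 2 * Real.sqrt (1 - r ^ 2))) *
      (Real.exp (-k * (p.1 - m) ^ 2) * Real.exp (-k * (p.2 - m) ^ 2)))
    ((hint.mul_prod hint).const_mul _)
    (continuous_biv m m s r).aestronglyMeasurable
    (ae_of_all _ fun p => ?_)
  rw [Real.norm_eq_abs, abs_of_nonneg (biv_nonneg m m s r p)]
  unfold bivGaussianDensity
  rw [← Real.exp_add]
  have hC : 0 ≤ (1 : ℝ) / (2 * Real.pi * s ^ 2 * Real.sqrt (1 - r ^ 2)) := by positivity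
  refine mul_le_mul_of_nonneg_left (Real.exp_le_exp.mpr ?_) hC
  set a := p.1 - m; set b := p.2 - m
  have key : (1 - |r|) * (a ^ 2 + b ^ 2) ≤ a ^ 2 - 2 * r * a * b + b ^ 2 := by
    have h2 : 2 * r * a * b ≤ |r| * (a ^ 2 + b ^ 2) := by
      have := abs_mul r (a * b)
      have h3 : 2 * (r * (a * b)) ≤ 2 * |r * (a * b)| := by
        have := le_abs_self (r * (a * b)); linarith
      have h4 : 2 * |a * b| ≤ a ^ 2 + b ^ 2 := by
        rw [abs_mul]
        nlinarith [sq_nonneg (|a| - |b|), sq_abs a, sq_abs b, abs_nonneg a, abs_nonneg b]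
      calc 2 * r * a * b = 2 * (r * (a * b)) := by ring
        _ ≤ 2 * (|r| * |a * b|) := by rw [← abs_mul]; linarith
        _ = |r| * (2 * |a * b|) := by ring
        _ ≤ |r| * (a ^ 2 + b ^ 2) := by
            exact mul_le_mul_of_nonneg_left h4 (abs_nonneg r)
    nlinarith
  have hkk : -k * (a ^ 2) + -k * (b ^ 2) =
      -(1 / (2 * s ^ 2 * (1 - r ^ 2))) * ((1 - |r|) * (a ^ 2 + b ^ 2)) := by
    rw [hk]; field_simp; ring
  rw [hkk]
  have hpos : 0 < 1 / (2 * s ^ 2 * (1 - r ^ 2)) := by positivity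
  rw [neg_mul, neg_mul, neg_le_neg_iff]
  exact mul_le_mul_of_nonneg_left key (le_of_lt hpos)

lemma biv_slice (m s r : ℝ) (hs : 0 < s) (hr : |r| < 1) (u x : ℝ) :
    bivGaussianDensity m m s r (x, u - x) =
      gaussianPDFReal (2 * m) ((2 * s ^ 2 * (1 + r)).toNNReal) u *
        ((Real.sqrt (Real.pi * (s ^ 2 * (1 - r))))⁻¹ *
          Real.exp (-(s ^ 2 * (1 - r))⁻¹ * (x - (m + (u - 2 * m) / 2)) ^ 2)) := by
  obtain ⟨hr1, hr2⟩ := abs_lt.mp hr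
  have h1r : 0 < 1 - r ^ 2 := by nlinarith
  have hm : 0 < 1 - r := by linarith
  have hp : 0 < 1 + r := by linarith
  have hV : ((2 * s ^ 2 * (1 + r)).toNNReal : ℝ) = 2 * s ^ 2 * (1 + r) :=
    Real.coe_toNNReal _ (by positivity)
  unfold bivGaussianDensity gaussianPDFReal
  rw [hV]
  rw [mul_mul_mul_comm, ← Real.exp_add]
  congr 1
  · -- coefficients
    have hXY : Real.sqrt (2 * Real.pi * (2 * s ^ 2 * (1 + r))) *
        Real.sqrt (Real.pi * (s ^ 2 * (1 - r))) = 2 * Real.pi * s ^ 2 * Real.sqrt (1 - r ^ 2) := by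
      rw [← Real.sqrt_mul (by positivity)]
      rw [show (2 * Real.pi * (2 * s ^ 2 * (1 + r))) * (Real.pi * (s ^ 2 * (1 - r)))
          = (2 * Real.pi * s ^ 2) ^ 2 * (1 - r ^ 2) by ring]
      rw [Real.sqrt_mul (by positivity), Real.sqrt_sq (by positivity)]
    rw [← mul_inv, hXY, one_div]
  · -- exponents
    congr 1
    field_simp
    ring

lemma integral_biv_slice (m s r : ℝ) (hs : 0 < s) (hr : |r| < 1) (u : ℝ) :
    ∫ x : ℝ, bivGaussianDensity m m s r (x, u - x) =
      gaussianPDFReal (2 * m) ((2 * s ^ 2 * (1 + r)).toNNReal) u := by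
  obtain ⟨hr1, hr2⟩ := abs_lt.mp hr
  have hm : 0 < 1 - r := by linarith
  have hA : 0 < s ^ 2 * (1 - r) := by positivity
  simp_rw [biv_slice m s r hs hr u]
  rw [integral_const_mul, integral_const_mul]
  have hint : ∫ x : ℝ, Real.exp (-(s ^ 2 * (1 - r))⁻¹ * (x - (m + (u - 2 * m) / 2)) ^ 2)
      = Real.sqrt (Real.pi * (s ^ 2 * (1 - r))) := by
    rw [integral_sub_right_eq_self
      (fun y => Real.exp (-(s ^ 2 * (1 - r))⁻¹ * y ^ 2)) (m + (u - 2 * m) / 2)]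
    rw [integral_gaussian, div_inv_eq_mul]
  rw [hint, inv_mul_cancel₀ (ne_of_gt (Real.sqrt_pos.mpr (by positivity))), mul_one]

lemma conv_lemma (m s r : ℝ) (hs : 0 < s) (hr : |r| < 1) :
    ∫ p : ℝ × ℝ, bivGaussianDensity m m s r p * logistic (p.1 + p.2) =
      ∫ u : ℝ, gaussianPDFReal (2 * m) ((2 * s ^ 2 * (1 + r)).toNNReal) u * logistic u := by
  have hρ := integrable_biv m s r hs hr
  have hcont : Continuous (fun p : ℝ × ℝ => bivGaussianDensity m m s r p * logistic (p.1 + p.2)) :=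
    (continuous_biv m m s r).mul (continuous_logistic.comp (continuous_fst.add continuous_snd))
  have hF : Integrable (fun p : ℝ × ℝ => bivGaussianDensity m m s r p * logistic (p.1 + p.2))
      (volume : Measure (ℝ × ℝ)) := by
    refine hρ.mono' hcont.aestronglyMeasurable (ae_of_all _ fun p => ?_)
    rw [Real.norm_eq_abs, abs_mul, abs_of_nonneg (biv_nonneg m m s r p),
      abs_of_pos (logistic_pos _)]
    calc bivGaussianDensity m m s r p * logistic (p.1 + p.2)
        ≤ bivGaussianDensity m m s r p * 1 :=
          mul_le_mul_of_nonneg_left (logistic_le_one _) (biv_nonneg m m s r p)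
      _ = bivGaussianDensity m m s r p := mul_one _
  rw [Measure.volume_eq_prod] at hF ⊢
  have hT : MeasurePreserving (fun z : ℝ × ℝ => (z.1, z.2 - z.1))
      (volume.prod volume) (volume.prod volume) := measurePreserving_prod_sub volume volume
  have hemb : MeasurableEmbedding (fun z : ℝ × ℝ => (z.1, z.2 - z.1)) :=
    (MeasurableEquiv.shearSubRight ℝ).measurableEmbedding
  rw [← hT.integral_comp hemb]
  have hG : (fun z : ℝ × ℝ =>
      (fun p : ℝ × ℝ => bivGaussianDensity m m s r p * logistic (p.1 + p.2)) ((fun z : ℝ × ℝ => (z.1, z.2 - z.1)) z))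
      = fun z : ℝ × ℝ => bivGaussianDensity m m s r (z.1, z.2 - z.1) * logistic z.2 := by
    funext z; simp
  rw [hG]
  have hGint : Integrable
      (fun z : ℝ × ℝ => bivGaussianDensity m m s r (z.1, z.2 - z.1) * logistic z.2)
      (volume.prod volume) := by
    have := (hT.integrable_comp_emb hemb).mpr hF
    rw [show ((fun p : ℝ × ℝ => bivGaussianDensity m m s r p * logistic (p.1 + p.2)) ∘
        (fun z : ℝ × ℝ => (z.1, z.2 - z.1)))
      = fun z : ℝ × ℝ => bivGaussianDensity m m s r (z.1, z.2 - z.1) * logistic z.2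
      from by funext z; simp] at this
    exact this
  rw [integral_prod_symm _ hGint]
  congr 1
  funext u
  simp only
  rw [show (fun x : ℝ => bivGaussianDensity m m s r (x, u - x) * logistic u)
      = fun x : ℝ => logistic u * bivGaussianDensity m m s r (x, u - x) from by
        funext x; ring]
  rw [integral_const_mul, integral_biv_slice m s r hs hr u, mul_comm]

lemma card_lt_pairs (n : ℕ) :
    2 * (Finset.univ.filter (fun p : Fin n × Fin n => p.1 < p.2)).card = n * n - n := by
  classical
  have hswap : (Finset.univ.filter (fun p : Fin n × Fin n => p.2 < p.1))
      = (Finset.univ.filter (fun p : Fin n × Fin n => p.1 < p.2)).image Prod.swap := by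
    ext ⟨a, b⟩
    simp only [Finset.mem_filter, Finset.mem_image, Finset.mem_univ, true_and, Prod.exists,
      Prod.swap_prod_mk, Prod.mk.injEq]
    constructor
    · intro h; exact ⟨b, a, h, rfl, rfl⟩
    · rintro ⟨x, y, h, rfl, rfl⟩; exact h
  have hswapcard : (Finset.univ.filter (fun p : Fin n × Fin n => p.2 < p.1)).card
      = (Finset.univ.filter (fun p : Fin n × Fin n => p.1 < p.2)).card := by
    rw [hswap, Finset.card_image_of_injective _ Prod.swap_injective]
  have hdiag : (Finset.univ.filter (fun p : Fin n × Fin n => p.1 = p.2)).card = n := by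
    have himg : (Finset.univ.filter (fun p : Fin n × Fin n => p.1 = p.2))
        = Finset.univ.image (fun i : Fin n => (i, i)) := by
      ext ⟨a, b⟩
      simp only [Finset.mem_filter, Finset.mem_image, Finset.mem_univ, true_and, Prod.mk.injEq]
      constructor
      · rintro rfl; exact ⟨a, rfl, rfl⟩
      · rintro ⟨x, rfl, rfl⟩; rfl
    rw [himg, Finset.card_image_of_injective _ (fun a b h => (Prod.mk.injEq _ _ _ _ ▸ h).1),
      Finset.card_univ, Fintype.card_fin]
  have hsplit : (Finset.univ.filter (fun p : Fin n × Fin n => ¬ p.1 < p.2))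
      = (Finset.univ.filter (fun p : Fin n × Fin n => p.2 < p.1))
        ∪ (Finset.univ.filter (fun p : Fin n × Fin n => p.1 = p.2)) := by
    ext p
    simp only [Finset.mem_filter, Finset.mem_union, Finset.mem_univ, true_and, not_lt,
      le_iff_lt_or_eq]
    tauto
  have hdisj : Disjoint (Finset.univ.filter (fun p : Fin n × Fin n => p.2 < p.1))
      (Finset.univ.filter (fun p : Fin n × Fin n => p.1 = p.2)) := by
    rw [Finset.disjoint_left]
    intro p hp hq
    rw [Finset.mem_filter] at hp hq
    exact absurd hq.2 (ne_of_gt hp.2)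
  have htotal := Finset.card_filter_add_card_filter_not
    (s := (Finset.univ : Finset (Fin n × Fin n))) (p := fun p => p.1 < p.2)
  rw [Finset.card_univ] at htotal
  simp only [Fintype.card_prod, Fintype.card_fin] at htotal
  rw [hsplit, Finset.card_union_of_disjoint hdisj, hswapcard, hdiag] at htotal
  omega

/-- In the static undirected fitness model where, conditional on
the fitnesses `θ`, each edge `{i,j}` is present independently with probability
`σ(θ_i + θ_j)` (so that `E[a_ij | θ] = σ(θ_i + θ_j)`), and the fitnesses are
jointly Gaussian with all means `m`, variances `s²` and pairwise correlations
`r`, the expected density `E[δ] = E[(2/(n(n-1))) ∑_{i<j} a_{ij}]` equals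
`I(2m, 2s²(1+r))`. -/
theorem fitness_model_expected_density
    (n : ℕ) (hn : 2 ≤ n) (m s r : ℝ) (hs : 0 < s) (hr : |r| < 1)
    (μθ : Measure (Fin n → ℝ)) [IsProbabilityMeasure μθ]
    (hpair : ∀ i j : Fin n, i ≠ j →
      Measure.map (fun θ => (θ i, θ j)) μθ =
        (volume : Measure (ℝ × ℝ)).withDensity
          (fun p => ENNReal.ofReal (bivGaussianDensity m m s r p))) :
    ∫ θ : Fin n → ℝ,
        (2 / ((n : ℝ) * ((n : ℝ) - 1))) *
          ∑ p ∈ Finset.univ.filter (fun p : Fin n × Fin n => p.1 < p.2),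
            logistic (θ p.1 + θ p.2) ∂μθ =
      logisticNormalI (2 * m) (Real.toNNReal (2 * s ^ 2 * (1 + r))) := by
  obtain ⟨hr1, hr2⟩ := abs_lt.mp hr
  have h1p : 0 < 1 + r := by linarith
  have hVpos : 0 < 2 * s ^ 2 * (1 + r) := mul_pos (by positivity) h1p
  set V : NNReal := (2 * s ^ 2 * (1 + r)).toNNReal with hV
  set J : ℝ := ∫ u : ℝ, gaussianPDFReal (2 * m) V u * logistic u with hJ
  -- RHS equals J
  have hIdef : logisticNormalI (2 * m) V = J := by
    have hv : V ≠ 0 := by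
      rw [hV]
      exact (Real.toNNReal_pos.mpr hVpos).ne'
    rw [logisticNormalI, gaussianReal_of_var_ne_zero _ hv]
    rw [show gaussianPDF (2 * m) V = fun x => ((fun x => (gaussianPDFReal (2 * m) V x).toNNReal) x : ℝ≥0∞) from rfl]
    rw [integral_withDensity_eq_integral_smul (measurable_gaussianPDFReal _ _).real_toNNReal]
    congr 1
    funext x
    rw [NNReal.smul_def, Real.coe_toNNReal _ (gaussianPDFReal_nonneg _ _ _), smul_eq_mul]
  -- each pair integral equals J
  have hij : ∀ i j : Fin n, i ≠ j →
      (∫ θ : Fin n → ℝ, logistic (θ i + θ j) ∂μθ) = J := by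
    intro i j hijne
    have hmeas : Measurable (fun θ : Fin n → ℝ => (θ i, θ j)) :=
      (measurable_pi_apply i).prodMk (measurable_pi_apply j)
    have hsm : AEStronglyMeasurable (fun p : ℝ × ℝ => logistic (p.1 + p.2))
        (Measure.map (fun θ : Fin n → ℝ => (θ i, θ j)) μθ) :=
      (continuous_logistic.comp (continuous_fst.add continuous_snd)).aestronglyMeasurable
    rw [show (fun θ : Fin n → ℝ => logistic (θ i + θ j))
        = fun θ : Fin n → ℝ => (fun p : ℝ × ℝ => logistic (p.1 + p.2)) ((fun θ : Fin n → ℝ => (θ i, θ j)) θ) from rfl]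
    rw [← integral_map hmeas.aemeasurable hsm, hpair i j hijne]
    rw [show (fun p : ℝ × ℝ => ENNReal.ofReal (bivGaussianDensity m m s r p))
        = fun p => ((fun p : ℝ × ℝ => (bivGaussianDensity m m s r p).toNNReal) p : ℝ≥0∞) from rfl]
    rw [integral_withDensity_eq_integral_smul (continuous_biv m m s r).measurable.real_toNNReal]
    rw [hJ, ← conv_lemma m s r hs hr]
    congr 1
    funext p
    rw [NNReal.smul_def, Real.coe_toNNReal _ (biv_nonneg m m s r p), smul_eq_mul]
  -- integrability of each summand
  have hint : ∀ p : Fin n × Fin n, p ∈ Finset.univ.filter (fun p : Fin n × Fin n => p.1 < p.2) →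
      Integrable (fun θ : Fin n → ℝ => logistic (θ p.1 + θ p.2)) μθ := by
    intro p _
    have hm2 : Measurable (fun θ : Fin n → ℝ => logistic (θ p.1 + θ p.2)) :=
      continuous_logistic.measurable.comp
        ((measurable_pi_apply p.1).add (measurable_pi_apply p.2))
    refine Integrable.mono' (integrable_const (1 : ℝ)) hm2.aestronglyMeasurable
      (ae_of_all _ fun θ => ?_)
    rw [Real.norm_eq_abs, abs_of_pos (logistic_pos _)]
    exact logistic_le_one _
  rw [integral_const_mul, integral_finset_sum _ hint]
  have hsum : ∑ p ∈ Finset.univ.filter (fun p : Fin n × Fin n => p.1 < p.2),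
      (∫ θ : Fin n → ℝ, logistic (θ p.1 + θ p.2) ∂μθ)
      = ((Finset.univ.filter (fun p : Fin n × Fin n => p.1 < p.2)).card : ℝ) * J := by
    rw [Finset.sum_congr rfl (fun p hp => hij p.1 p.2 (ne_of_lt (Finset.mem_filter.mp hp).2))]
    rw [Finset.sum_const, nsmul_eq_mul]
  rw [hsum, hIdef]
  have hcard := card_lt_pairs n
  have hn1 : (1 : ℕ) ≤ n := by omega
  have hsub : n * n - n = n * (n - 1) := by
    cases n with
    | zero => simp
    | succ k => simp [Nat.succ_sub_one, Nat.mul_sub, Nat.succ_mul, Nat.mul_succ]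
  have hcardN : 2 * (Finset.univ.filter (fun p : Fin n × Fin n => p.1 < p.2)).card
      = n * (n - 1) := by rw [hcard, hsub]
  have hcardR : ((Finset.univ.filter (fun p : Fin n × Fin n => p.1 < p.2)).card : ℝ) * 2
      = (n : ℝ) * ((n : ℝ) - 1) := by
    have h2 := congrArg (Nat.cast : ℕ → ℝ) hcardN
    push_cast [Nat.cast_sub hn1] at h2
    linarith
  have hnR : (2 : ℝ) ≤ (n : ℝ) := by exact_mod_cast hn
  have hpos : 0 < (n : ℝ) * ((n : ℝ) - 1) := by nlinarith
  have hn1R : (n : ℝ) - 1 ≠ 0 := (by linarith : (0:ℝ) < (n : ℝ) - 1).ne'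
  field_simp
  linear_combination J * hcardR
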